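/- Fix e with 0 < e < 1/2, and suppose that for all ε ∈ (0, 2e) one has S(e, e³ − (e−ε)³) = −(1/2)[I₀(ε) + I₀(2e−ε)]. Then 2e³ < e^{3/2}, the point (e, 2e³) lies in the interior (in ℝ²) of R, and the function t ↦ S(e,t) is not real-analytic at t = 2e³, i.e., it does not agree with any real-analytic function on any open interval around 2e³. -/

import Mathlib

open MeasureTheory Real Set Filter

noncomputable section

/-- `I₀(u) = (1/2)[u ln u + (1-u) ln(1-u)]`, with the convention `log 0 = 0`
    giving `I₀(0) = I₀(1) = 0`. -/
def I0 (u : ℝ) : ℝ := (u * Real.log u + (1 - u) * Real.log (1 - u)) / 2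

/-- `I₀'(u) = (1/2)[ln u − ln(1−u)]`. -/
def I0d (u : ℝ) : ℝ := (Real.log u - Real.log (1 - u)) / 2

/-- `I₀''(u) = (1/2)[1/u + 1/(1−u)]`. -/
def I0dd (u : ℝ) : ℝ := (1 / u + 1 / (1 - u)) / 2

/-- A graphon: a measurable, symmetric function `[0,1]² → [0,1]`
    (here defined on all of `ℝ²`, with values used only on `[0,1]²`). -/
def IsGraphon (g : ℝ → ℝ → ℝ) : Prop :=
  Measurable (Function.uncurry g) ∧ (∀ x y, g x y = g y x) ∧ ∀ x y, g x y ∈ Icc (0 : ℝ) 1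

/-- The edge density `e(g) = ∫₀¹∫₀¹ g(x,y) dx dy`. -/
def edgeDensity (g : ℝ → ℝ → ℝ) : ℝ :=
  ∫ x in Icc (0 : ℝ) 1, ∫ y in Icc (0 : ℝ) 1, g x y

/-- The triangle density `t(g) = ∫₀¹∫₀¹∫₀¹ g(x,y) g(y,z) g(z,x) dx dy dz`. -/
def triangleDensity (g : ℝ → ℝ → ℝ) : ℝ :=
  ∫ x in Icc (0 : ℝ) 1, ∫ y in Icc (0 : ℝ) 1, ∫ z in Icc (0 : ℝ) 1, g x y * g y z * g z x

/-- The rate function `I(g) = ∫₀¹∫₀¹ I₀(g(x,y)) dx dy`. -/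
def rate (g : ℝ → ℝ → ℝ) : ℝ :=
  ∫ x in Icc (0 : ℝ) 1, ∫ y in Icc (0 : ℝ) 1, I0 (g x y)

/-- Lebesgue measure restricted to `[0,1]`. -/
def unitMeasure : Measure ℝ := volume.restrict (Icc (0 : ℝ) 1)

/-- Two graphons are equivalent if they agree a.e. after composing with
    measure-preserving maps of `[0,1]`. -/
def GraphonEquiv (f g : ℝ → ℝ → ℝ) : Prop :=
  ∃ σ σ' : ℝ → ℝ, MeasurePreserving σ unitMeasure unitMeasure ∧
    MeasurePreserving σ' unitMeasure unitMeasure ∧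
    ∀ᵐ p ∂(unitMeasure.prod unitMeasure), f (σ p.1) (σ p.2) = g (σ' p.1) (σ' p.2)

end

/-- The set `R` of achievable pairs `(e(g), t(g))`. -/
def Rset : Set (ℝ × ℝ) :=
  {q | ∃ g, IsGraphon g ∧ edgeDensity g = q.1 ∧ triangleDensity g = q.2}

/-- The entropy `S(e,t) = −inf { I(g) : e(g) = e, t(g) = t }`. -/
noncomputable def entropy (e t : ℝ) : ℝ :=
  -sInf (rate '' {g | IsGraphon g ∧ edgeDensity g = e ∧ triangleDensity g = t})

/-- indicator of [0,s] -/
noncomputable def chi (s : ℝ) (x : ℝ) : ℝ := (Set.Icc (0:ℝ) s).indicator 1 x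

lemma chi_sq (s x : ℝ) : chi s x * chi s x = chi s x := by
  unfold chi; by_cases h : x ∈ Set.Icc (0:ℝ) s <;> simp [h]

lemma chi_mem (s x : ℝ) : chi s x ∈ Set.Icc (0:ℝ) 1 := by
  unfold chi; by_cases h : x ∈ Set.Icc (0:ℝ) s <;> simp [h]

lemma chi_meas (s : ℝ) : Measurable (chi s) :=
  (measurable_const.indicator measurableSet_Icc)

instance : IsFiniteMeasure (volume.restrict (Icc (0:ℝ) 1)) := by
  constructor
  rw [Measure.restrict_apply_univ]
  simp [Real.volume_Icc]

lemma chi_integral {s : ℝ} (hs : s ∈ Icc (0:ℝ) 1) :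
    ∫ x in Icc (0:ℝ) 1, chi s x = s := by
  unfold chi
  rw [MeasureTheory.setIntegral_indicator measurableSet_Icc]
  have h : Icc (0:ℝ) 1 ∩ Icc 0 s = Icc 0 s := by
    rw [Icc_inter_Icc]
    simp [hs.1, hs.2, min_eq_right hs.2]
  rw [h]
  simp [Real.volume_Icc, hs.1]

lemma chi_integrable (s : ℝ) : IntegrableOn (chi s) (Icc (0:ℝ) 1) := by
  have h : Integrable (fun _ => (1:ℝ)) (volume.restrict (Icc (0:ℝ) 1)) := integrable_const 1
  exact h.indicator measurableSet_Icc

lemma int_affine {s : ℝ} (hs : s ∈ Icc (0:ℝ) 1) (a b : ℝ) :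
    ∫ x in Icc (0:ℝ) 1, (a + b * chi s x) = a + b * s := by
  rw [integral_add (integrable_const a) ((chi_integrable s).const_mul b),
    integral_const, integral_const_mul, chi_integral hs]
  simp [Real.volume_Icc]


/-- two-value graphon: 1 on [0,s]², d elsewhere -/
noncomputable def G (s d : ℝ) (x y : ℝ) : ℝ := d + (1 - d) * (chi s x * chi s y)

lemma G_isGraphon {s d : ℝ} (hd : d ∈ Icc (0:ℝ) 1) : IsGraphon (G s d) := by
  refine ⟨?_, ?_, ?_⟩
  · have : Function.uncurry (G s d) =
        fun p : ℝ × ℝ => d + (1 - d) * (chi s p.1 * chi s p.2) := rfl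
    rw [this]
    exact measurable_const.add (measurable_const.mul
      (((chi_meas s).comp measurable_fst).mul ((chi_meas s).comp measurable_snd)))
  · intro x y; unfold G; ring
  · intro x y
    have hx := chi_mem s x; have hy := chi_mem s y
    unfold G
    have hp0 : 0 ≤ chi s x * chi s y := mul_nonneg hx.1 hy.1
    have hp1 : chi s x * chi s y ≤ 1 := mul_le_one₀ hx.2 hy.1 hy.2
    have h1d : 0 ≤ 1 - d := by linarith [hd.2]
    constructor
    · nlinarith [mul_nonneg h1d hp0, hd.1]
    · nlinarith [mul_le_mul_of_nonneg_left hp1 h1d, hd.1]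

lemma G_edge {s d : ℝ} (hs : s ∈ Icc (0:ℝ) 1) :
    edgeDensity (G s d) = d + (1 - d) * s^2 := by
  unfold edgeDensity
  have h1 : ∀ x, (∫ y in Icc (0:ℝ) 1, G s d x y) = d + ((1-d) * chi s x) * s := by
    intro x
    rw [show (fun y => G s d x y) = fun y => d + ((1-d) * chi s x) * chi s y from
      funext fun y => by unfold G; ring]
    exact int_affine hs _ _
  rw [show (fun x => ∫ y in Icc (0:ℝ) 1, G s d x y)
      = fun x => d + ((1-d)*s) * chi s x from funext fun x => by rw [h1 x]; ring]
  rw [int_affine hs]; ring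

lemma G_triangle {s d : ℝ} (hs : s ∈ Icc (0:ℝ) 1) :
    triangleDensity (G s d) =
      d^3 + 3*(1-d)*d^2*s^2 + (3*d*(1-d)^2 + (1-d)^3)*s^3 := by
  unfold triangleDensity
  set c := 1 - d with hc
  -- innermost integral
  have hz : ∀ x y, (∫ z in Icc (0:ℝ) 1, G s d x y * G s d y z * G s d z x)
      = (d^3 + c*d^2*(chi s x*chi s y))
        + (c*d^2*chi s y + c*d^2*chi s x + (3*d*c^2+c^3)*(chi s x*chi s y)) * s := by
    intro x y
    rw [show (fun z => G s d x y * G s d y z * G s d z x)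
        = fun z => (d^3 + c*d^2*(chi s x*chi s y))
          + (c*d^2*chi s y + c*d^2*chi s x + (3*d*c^2+c^3)*(chi s x*chi s y)) * chi s z from
      funext fun z => by
        unfold G chi
        by_cases hx : x ∈ Icc (0:ℝ) s <;> by_cases hy : y ∈ Icc (0:ℝ) s <;>
          by_cases hzz : z ∈ Icc (0:ℝ) s <;> simp [hx, hy, hzz] <;> ring]
    exact int_affine hs _ _
  have hy : ∀ x, (∫ y in Icc (0:ℝ) 1,
        ∫ z in Icc (0:ℝ) 1, G s d x y * G s d y z * G s d z x)
      = d^3 + c*d^2*s^2 + (2*c*d^2*s + (3*d*c^2+c^3)*s^2) * chi s x := by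
    intro x
    rw [show (fun y => ∫ z in Icc (0:ℝ) 1, G s d x y * G s d y z * G s d z x)
        = fun y => (d^3 + c*d^2*s*chi s x)
          + (c*d^2*chi s x + c*d^2*s + (3*d*c^2+c^3)*s*chi s x) * chi s y from
      funext fun y => by
        rw [hz x y]
        unfold chi
        by_cases hyy : y ∈ Icc (0:ℝ) s <;> simp [hyy] <;> ring]
    rw [int_affine hs]
    ring
  rw [show (fun x => ∫ y in Icc (0:ℝ) 1,
        ∫ z in Icc (0:ℝ) 1, G s d x y * G s d y z * G s d z x)
      = fun x => (d^3 + c*d^2*s^2) + (2*c*d^2*s + (3*d*c^2+c^3)*s^2) * chi s x from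
    funext fun x => (hy x).trans (by ring)]
  rw [int_affine hs]
  ring

lemma mem_Rset {e' t' : ℝ} (he0 : 0 ≤ e') (he1 : e' < 1)
    (ht1 : e'^3 ≤ t') (ht2 : t' ≤ e' * Real.sqrt e') : (e', t') ∈ Rset := by
  set σ : ℝ → ℝ := fun d => Real.sqrt ((e' - d)/(1 - d)) with hσdef
  set ψ : ℝ → ℝ := fun d =>
    d^3 + 3*(1-d)*d^2*(σ d)^2 + (3*d*(1-d)^2 + (1-d)^3)*(σ d)^3 with hψdef
  have hfrac : ∀ d ∈ Icc (0:ℝ) e', (e' - d)/(1 - d) ∈ Icc (0:ℝ) 1 := by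
    intro d hd
    have h1 : 0 < 1 - d := by linarith [hd.2]
    constructor
    · exact div_nonneg (by linarith [hd.2]) h1.le
    · rw [div_le_one h1]; linarith
  have hσmem : ∀ d ∈ Icc (0:ℝ) e', σ d ∈ Icc (0:ℝ) 1 := by
    intro d hd
    exact ⟨Real.sqrt_nonneg _, Real.sqrt_le_one.mpr (hfrac d hd).2⟩
  have hσsq : ∀ d ∈ Icc (0:ℝ) e', (σ d)^2 = (e' - d)/(1 - d) := by
    intro d hd
    exact Real.sq_sqrt (hfrac d hd).1
  -- continuity of ψ on [0, e']
  have hcont : ContinuousOn ψ (uIcc (0:ℝ) e') := by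
    rw [uIcc_of_le he0]
    have hσc : ContinuousOn σ (Icc (0:ℝ) e') := by
      apply Real.continuous_sqrt.comp_continuousOn
      apply ContinuousOn.div (by fun_prop) (by fun_prop)
      intro d hd
      have : 0 < 1 - d := by linarith [hd.2, he1]
      exact ne_of_gt this
    fun_prop
  -- endpoint values
  have hψ0 : ψ 0 = e' * Real.sqrt e' := by
    have hs : σ 0 = Real.sqrt e' := by simp [hσdef]
    simp only [hψdef, hs]
    have : Real.sqrt e' ^ 3 = e' * Real.sqrt e' := by
      rw [pow_succ, Real.sq_sqrt he0]
    rw [this]; ring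
  have hψe : ψ e' = e'^3 := by
    have hs : σ e' = 0 := by simp [hσdef]
    simp [hψdef, hs]
  -- IVT
  have hmem : t' ∈ uIcc (ψ 0) (ψ e') := by
    rw [hψ0, hψe, Set.mem_uIcc]; right; exact ⟨ht1, ht2⟩
  obtain ⟨d, hd, hψd⟩ := intermediate_value_uIcc hcont hmem
  rw [uIcc_of_le he0] at hd
  have hd1 : d ∈ Icc (0:ℝ) 1 := ⟨hd.1, by linarith [hd.2, he1]⟩
  refine ⟨G (σ d) d, G_isGraphon hd1, ?_, ?_⟩
  · rw [G_edge (hσmem d hd), hσsq d hd]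
    have h1 : (1:ℝ) - d ≠ 0 := by intro h; simp at *; nlinarith [hd.2]
    field_simp
    ring
  · rw [G_triangle (hσmem d hd)]
    exact hψd

lemma interior_lemma {e t : ℝ} (he0 : 0 < e) (he1 : e < 1)
    (ht1 : e^3 < t) (ht2 : t < e * Real.sqrt e) : (e, t) ∈ interior Rset := by
  have hU : IsOpen {p : ℝ × ℝ | 0 < p.1 ∧ p.1 < 1 ∧ p.1^3 < p.2 ∧ p.2 < p.1 * Real.sqrt p.1} := by
    apply IsOpen.inter (isOpen_lt continuous_const continuous_fst)
    apply IsOpen.inter (isOpen_lt continuous_fst continuous_const)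
    apply IsOpen.inter (isOpen_lt (by fun_prop) continuous_snd)
    exact isOpen_lt continuous_snd (continuous_fst.mul (Real.continuous_sqrt.comp continuous_fst))
  have hsub : {p : ℝ × ℝ | 0 < p.1 ∧ p.1 < 1 ∧ p.1^3 < p.2 ∧ p.2 < p.1 * Real.sqrt p.1} ⊆ Rset := by
    rintro ⟨x, y⟩ ⟨h1, h2, h3, h4⟩
    exact mem_Rset h1.le h2 h3.le h4.le
  exact interior_maximal hsub hU ⟨he0, he1, ht1, ht2⟩

lemma continuous_I0 : Continuous I0 := by
  unfold I0
  have h1 : Continuous fun u : ℝ => u * Real.log u := Real.continuous_mul_log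
  have h2 : Continuous fun u : ℝ => (1 - u) * Real.log (1 - u) :=
    Real.continuous_mul_log.comp (continuous_const.sub continuous_id)
  exact (h1.add h2).div_const 2

lemma I0_zero : I0 0 = 0 := by simp [I0]

lemma hasDerivAt_I0 {u : ℝ} (h0 : u ≠ 0) (h1 : (1:ℝ) - u ≠ 0) :
    HasDerivAt I0 (I0d u) u := by
  have ha : HasDerivAt (fun x : ℝ => x * Real.log x) (Real.log u + 1) u :=
    Real.hasDerivAt_mul_log h0
  have hb : HasDerivAt (fun x : ℝ => (1 - x) * Real.log (1 - x))
      ((Real.log (1 - u) + 1) * (-1)) u := by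
    have hg : HasDerivAt (fun y : ℝ => y * Real.log y) (Real.log (1 - u) + 1) ((fun x : ℝ => 1 - x) u) :=
      Real.hasDerivAt_mul_log h1
    have hlin : HasDerivAt (fun x : ℝ => 1 - x) (-1) u := (hasDerivAt_id u).const_sub 1
    exact hg.comp u hlin
  have h := (ha.add hb).div_const 2
  have heq : (Real.log u + 1 + (Real.log (1 - u) + 1) * (-1)) / 2 = I0d u := by
    unfold I0d; ring
  rw [heq] at h
  exact h

-- slope limit for δ ↦ (I0 (2e) - I0 (2e - δ))/δ
lemma tendsto_A {v : ℝ} (h0 : v ≠ 0) (h1 : (1:ℝ) - v ≠ 0) :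
    Tendsto (fun δ : ℝ => (I0 v - I0 (v - δ)) / δ) (nhdsWithin 0 (Set.Ioi 0)) (nhds (I0d v)) := by
  have hlin : HasDerivAt (fun δ : ℝ => v - δ) (-1) 0 := (hasDerivAt_id 0).const_sub v
  have hI : HasDerivAt I0 (I0d v) ((fun δ : ℝ => v - δ) 0) := by
    simpa using hasDerivAt_I0 h0 h1
  have h := (hI.comp 0 hlin)
  rw [hasDerivAt_iff_tendsto_slope] at h
  have h2 : Tendsto (fun δ : ℝ => (I0 (v - δ) - I0 v) / δ) (nhdsWithin 0 {(0:ℝ)}ᶜ)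
      (nhds (I0d v * (-1))) := by
    refine h.congr fun δ => ?_
    simp [slope_def_field, Function.comp]
  have h3 := h2.neg
  rw [show -(I0d v * (-1)) = I0d v by ring] at h3
  have h4 : Tendsto (fun δ : ℝ => (I0 v - I0 (v - δ)) / δ) (nhdsWithin 0 {(0:ℝ)}ᶜ)
      (nhds (I0d v)) := by
    refine h3.congr fun δ => ?_
    rw [← neg_div, neg_sub]
  exact h4.mono_left (nhdsWithin_mono _ (fun x hx => ne_of_gt hx))

-- δ ↦ ((1-δ) log(1-δ))/δ → -1
lemma tendsto_C :
    Tendsto (fun δ : ℝ => ((1 - δ) * Real.log (1 - δ)) / δ) (nhdsWithin 0 (Set.Ioi 0)) (nhds (-1)) := by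
  have hg : HasDerivAt (fun y : ℝ => y * Real.log y) (Real.log ((fun x : ℝ => 1 - x) 0) + 1)
      ((fun x : ℝ => 1 - x) 0) := Real.hasDerivAt_mul_log (by norm_num)
  have hlin : HasDerivAt (fun x : ℝ => 1 - x) (-1) 0 := (hasDerivAt_id 0).const_sub 1
  have h := hg.comp 0 hlin
  rw [hasDerivAt_iff_tendsto_slope] at h
  have h2 : Tendsto (fun δ : ℝ => ((1 - δ) * Real.log (1 - δ)) / δ) (nhdsWithin 0 {(0:ℝ)}ᶜ)
      (nhds (-1)) := by
    have heq : (Real.log ((fun x : ℝ => 1 - x) 0) + 1) * (-1) = -1 := by norm_num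
    rw [heq] at h
    refine h.congr fun δ => ?_
    simp [slope_def_field, Function.comp]
  exact h2.mono_left (nhdsWithin_mono _ (fun x hx => ne_of_gt hx))

-- I0 δ / δ → -∞
lemma tendsto_B : Tendsto (fun δ : ℝ => I0 δ / δ) (nhdsWithin 0 (Set.Ioi 0)) atBot := by
  have hlog : Tendsto (fun δ : ℝ => Real.log δ) (nhdsWithin 0 (Set.Ioi 0)) atBot :=
    Real.tendsto_log_nhdsNE_zero.mono_left (nhdsWithin_mono _ (fun x hx => ne_of_gt hx))
  have hsum : Tendsto (fun δ : ℝ => Real.log δ + ((1 - δ) * Real.log (1 - δ)) / δ)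
      (nhdsWithin 0 (Set.Ioi 0)) atBot := hlog.atBot_add tendsto_C
  have h2 := hsum.atBot_div_const (by norm_num : (0:ℝ) < 2)
  refine h2.congr' ?_
  filter_upwards [self_mem_nhdsWithin] with δ hδ
  have hδ0 : δ ≠ 0 := ne_of_gt hδ
  unfold I0
  field_simp

lemma tendsto_Q {e : ℝ} (he0 : 0 < e) (he : e < 1/2) :
    Tendsto (fun δ : ℝ => ((I0 (2*e) - I0 (2*e - δ) - I0 δ)/2) / ((e - δ)^3 - e^3))
      (nhdsWithin 0 (Set.Ioi 0)) atBot := by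
  have h2e0 : (2*e) ≠ 0 := by positivity
  have h2e1 : (1:ℝ) - 2*e ≠ 0 := by intro h; nlinarith
  have hA := tendsto_A h2e0 h2e1
  -- numerator over δ tends to +∞
  have hN : Tendsto (fun δ : ℝ => ((I0 (2*e) - I0 (2*e - δ) - I0 δ)/2) / δ)
      (nhdsWithin 0 (Set.Ioi 0)) atTop := by
    have hsub : Tendsto (fun δ : ℝ => ((I0 (2*e) - I0 (2*e - δ))/δ - I0 δ/δ))
        (nhdsWithin 0 (Set.Ioi 0)) atTop := by
      have hnegB : Tendsto (fun δ : ℝ => -(I0 δ/δ)) (nhdsWithin 0 (Set.Ioi 0)) atTop :=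
        tendsto_neg_atTop_iff.mpr tendsto_B
      have := hA.add_atTop hnegB
      exact this.congr fun δ => by ring
    have h2 := hsub.atTop_div_const (by norm_num : (0:ℝ) < 2)
    refine h2.congr' ?_
    filter_upwards [self_mem_nhdsWithin] with δ hδ
    rw [div_sub_div_same, div_div, div_div, mul_comm δ 2]
  -- denominator over δ tends to -3e²
  have hD : Tendsto (fun δ : ℝ => ((e - δ)^3 - e^3) / δ)
      (nhdsWithin 0 (Set.Ioi 0)) (nhds (-(3*e^2))) := by
    have hpoly : Tendsto (fun δ : ℝ => -(3*e^2) + 3*e*δ - δ^2)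
        (nhdsWithin 0 (Set.Ioi 0)) (nhds (-(3*e^2))) := by
      have : Continuous fun δ : ℝ => -(3*e^2) + 3*e*δ - δ^2 := by fun_prop
      have h0 : Tendsto (fun δ : ℝ => -(3*e^2) + 3*e*δ - δ^2) (nhdsWithin 0 (Set.Ioi 0))
          (nhds (-(3*e^2) + 3*e*0 - 0^2)) := (this.tendsto 0).mono_left nhdsWithin_le_nhds
      simpa using h0
    refine hpoly.congr' ?_
    filter_upwards [self_mem_nhdsWithin] with δ hδ
    have hδ0 : δ ≠ 0 := ne_of_gt hδ
    field_simp
    ring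
  have hDneg : -(3*e^2) < 0 := by nlinarith [sq_nonneg e]
  have hInv := hD.inv₀ (ne_of_lt hDneg)
  have hC : (-(3*e^2))⁻¹ < 0 := inv_lt_zero.mpr hDneg
  have hMul := hN.atTop_mul_neg hC hInv
  refine hMul.congr' ?_
  filter_upwards [self_mem_nhdsWithin] with δ hδ
  have hδ0 : δ ≠ 0 := ne_of_gt hδ
  by_cases hb : (e - δ)^3 - e^3 = 0
  · simp [hb]
  · field_simp

/-- fixing `0 < e < 1/2`, if the perturbative entropy formula
    holds for all `ε ∈ (0, 2e)`, then `2e³ < e^{3/2}`, the point `(e, 2e³)` is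
    interior to `R`, and `t ↦ S(e,t)` is not real-analytic at `t = 2e³`. -/
theorem transition_in_t (e : ℝ) (he0 : 0 < e) (he : e < 1 / 2)
    (hyp : ∀ ε : ℝ, 0 < ε → ε < 2 * e →
      entropy e (e ^ 3 - (e - ε) ^ 3) = -(I0 ε + I0 (2 * e - ε)) / 2) :
    2 * e ^ 3 < e ^ ((3 : ℝ) / 2) ∧ (e, 2 * e ^ 3) ∈ interior Rset ∧
      ¬∃ (f : ℝ → ℝ) (a b : ℝ), a < 2 * e ^ 3 ∧ 2 * e ^ 3 < b ∧
        (∀ t ∈ Ioo a b, AnalyticAt ℝ f t) ∧ ∀ t ∈ Ioo a b, f t = entropy e t := by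
  -- part 1 preliminaries
  have hsq3 : Real.sqrt (e^3) = e * Real.sqrt e := by
    rw [pow_succ, Real.sqrt_mul (sq_nonneg e), Real.sqrt_sq he0.le]
  have hpow : e ^ ((3 : ℝ) / 2) = e * Real.sqrt e := by
    rw [show (3:ℝ)/2 = 1 + 1/2 by norm_num, Real.rpow_add he0, Real.rpow_one,
      ← Real.sqrt_eq_rpow]
  have h8 : e^3 < 1/8 := by
    have h := pow_lt_pow_left₀ he he0.le (n := 3) (by norm_num)
    norm_num at h
    linarith
  have hpart1' : 2 * e^3 < Real.sqrt (e^3) := by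
    rw [Real.lt_sqrt (by positivity)]
    nlinarith [pow_pos he0 3]
  have hpart1 : 2 * e^3 < e ^ ((3 : ℝ) / 2) := by
    rw [hpow, ← hsq3]; exact hpart1'
  refine ⟨hpart1, ?_, ?_⟩
  · exact interior_lemma he0 (by linarith) (by nlinarith [pow_pos he0 3])
      (by rw [← hsq3]; exact hpart1')
  · rintro ⟨f, a, b, ha, hb, han, hfe⟩
    set T : ℝ → ℝ := fun δ => e^3 + (e - δ)^3 with hT
    have hT0 : T 0 = 2*e^3 := by simp only [hT]; ring
    have hTlim : Tendsto T (nhdsWithin 0 (Set.Ioi 0)) (nhds (2*e^3)) := by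
      have hc : Continuous T := by fun_prop
      have h0 : Tendsto T (nhdsWithin (0:ℝ) (Set.Ioi 0)) (nhds (T 0)) :=
        (hc.tendsto 0).mono_left nhdsWithin_le_nhds
      rwa [hT0] at h0
    have hTlt : ∀ δ : ℝ, 0 < δ → T δ < 2*e^3 := by
      intro δ hδ
      simp only [hT]
      nlinarith [mul_nonneg hδ.le (sq_nonneg (2*e - δ)), pow_pos hδ 3]
    have hmemIoo : ∀ᶠ δ in nhdsWithin (0:ℝ) (Set.Ioi 0), T δ ∈ Ioo a b := by
      filter_upwards [hTlim.eventually (eventually_gt_nhds ha), self_mem_nhdsWithin]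
        with δ h1 h2
      exact ⟨h1, lt_trans (hTlt δ h2) hb⟩
    have hsmall : Set.Ioo (0:ℝ) (2*e) ∈ nhdsWithin (0:ℝ) (Set.Ioi 0) :=
      Ioo_mem_nhdsGT_of_mem ⟨le_refl 0, by positivity⟩
    have hfT : ∀ᶠ δ in nhdsWithin (0:ℝ) (Set.Ioi 0),
        f (T δ) = -(I0 (2*e - δ) + I0 δ)/2 := by
      filter_upwards [hmemIoo, hsmall] with δ h1 h2
      have h3 := hyp (2*e - δ) (by linarith [h2.2]) (by linarith [h2.1])
      have harg : e^3 - (e - (2*e - δ))^3 = T δ := by simp only [hT]; ring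
      have harg2 : 2*e - (2*e - δ) = δ := by ring
      rw [harg, harg2] at h3
      rw [hfe _ h1, h3]
    have hf2 : AnalyticAt ℝ f (2*e^3) := han _ ⟨ha, hb⟩
    have hfval : f (2*e^3) = -(I0 (2*e))/2 := by
      have hl1 : Tendsto (fun δ => f (T δ)) (nhdsWithin (0:ℝ) (Set.Ioi 0))
          (nhds (f (2*e^3))) := (hf2.continuousAt.tendsto).comp hTlim
      have hc : Continuous fun δ : ℝ => -(I0 (2*e - δ) + I0 δ)/2 :=
        (((continuous_I0.comp (continuous_const.sub continuous_id)).add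
          continuous_I0).neg).div_const 2
      have hl2 : Tendsto (fun δ : ℝ => -(I0 (2*e - δ) + I0 δ)/2)
          (nhdsWithin (0:ℝ) (Set.Ioi 0)) (nhds (-(I0 (2*e) + I0 0)/2)) := by
        have h0 : Tendsto (fun δ : ℝ => -(I0 (2*e - δ) + I0 δ)/2)
            (nhdsWithin (0:ℝ) (Set.Ioi 0)) (nhds (-(I0 (2*e - 0) + I0 0)/2)) :=
          (hc.tendsto 0).mono_left nhdsWithin_le_nhds
        simpa using h0
      have huniq := tendsto_nhds_unique (hl1.congr' hfT) hl2
      rw [huniq, I0_zero, add_zero]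
    have hder : HasDerivAt f (deriv f (2*e^3)) (2*e^3) := hf2.differentiableAt.hasDerivAt
    have hslope := hasDerivAt_iff_tendsto_slope.mp hder
    have hTne : Tendsto T (nhdsWithin (0:ℝ) (Set.Ioi 0)) (nhdsWithin (2*e^3) {(2*e^3)}ᶜ) := by
      refine tendsto_nhdsWithin_iff.mpr ⟨hTlim, ?_⟩
      filter_upwards [self_mem_nhdsWithin] with δ hδ
      exact ne_of_lt (hTlt δ hδ)
    have hcomp : Tendsto (fun δ => slope f (2*e^3) (T δ)) (nhdsWithin (0:ℝ) (Set.Ioi 0))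
        (nhds (deriv f (2*e^3))) := hslope.comp hTne
    have hQ := tendsto_Q he0 he
    have hbot : Tendsto (fun δ => slope f (2*e^3) (T δ)) (nhdsWithin (0:ℝ) (Set.Ioi 0))
        atBot := by
      refine hQ.congr' ?_
      filter_upwards [hfT, self_mem_nhdsWithin] with δ h1 _
      rw [slope_def_field, h1, hfval]
      congr 1
      · ring
      · simp only [hT]; ring
    exact not_tendsto_nhds_of_tendsto_atBot hbot _ hcomp
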